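/- arXiv:2109.07302 — 3 statements merged into one kernel-verified Lean document; each statement's English description precedes it below -/
import Mathlib

section
/- The AND₂ gadget graph (two input gates of 2 vertices each, a middle layer of 4 vertices encoding XOR, and one output gate of 2 vertices, connected as: input-pair bits (x,y) with x⊕y = z wired to middle vertices and middle vertex (encoding output bit z) adjacent to output vertex z) admits, for each input gate, an automorphism that swaps the two vertices of that input gate and the two output vertices while fixing both vertices of the other input gate. -/
/-- Edge list of the AND₂ gadget: b₀,b₁ = 0,1 (input gate 1), b₂,b₃ = 2,3 (input gate 2),
c₀..c₃ = 4..7 (middle layer), a₀,a₁ = 8,9 (output gate). -/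
def andEdges : List (Fin 10 × Fin 10) :=
  [(0,4),(0,6),(1,5),(1,7),(2,5),(2,6),(3,4),(3,7),(4,8),(5,8),(6,9),(7,9)]

/-- The AND₂ gadget graph. -/
def andGadget : SimpleGraph (Fin 10) where
  Adj x y := x ≠ y ∧ ((x, y) ∈ andEdges ∨ (y, x) ∈ andEdges)
  symm := ⟨fun _ _ h => ⟨h.1.symm, h.2.symm⟩⟩
  loopless := ⟨fun _ h => h.1 rfl⟩

/-- Gate coloring of the AND₂ gadget: input gate 1, input gate 2, middle, output. -/
def andColor : Fin 10 → Fin 4 := ![0, 0, 1, 1, 2, 2, 2, 2, 3, 3]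

instance : DecidableRel andGadget.Adj := fun x y => by
  unfold andGadget; exact (inferInstance : Decidable (x ≠ y ∧ ((x, y) ∈ andEdges ∨ (y, x) ∈ andEdges)))

def f0 : Fin 10 ≃ Fin 10 where
  toFun := ![1,0,2,3,7,6,5,4,9,8]
  invFun := ![1,0,2,3,7,6,5,4,9,8]
  left_inv := by decide
  right_inv := by decide

def f1 : Fin 10 ≃ Fin 10 where
  toFun := ![0,1,3,2,6,7,4,5,9,8]
  invFun := ![0,1,3,2,6,7,4,5,9,8]
  left_inv := by decide
  right_inv := by decide

/-- For each input gate of the AND₂ gadget there is a color-preserving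
automorphism swapping the two vertices of that input gate and the two output vertices,
while fixing both vertices of the other input gate. -/
theorem stmt_8 : ∀ g : Fin 2, ∃ f : Fin 10 ≃ Fin 10,
    (∀ x y, andGadget.Adj (f x) (f y) ↔ andGadget.Adj x y) ∧
    (∀ x, andColor (f x) = andColor x) ∧
    (g = 0 → f 0 = 1 ∧ f 1 = 0 ∧ f 2 = 2 ∧ f 3 = 3) ∧
    (g = 1 → f 2 = 3 ∧ f 3 = 2 ∧ f 0 = 0 ∧ f 1 = 1) ∧
    f 8 = 9 ∧ f 9 = 8 := by
  intro g
  fin_cases g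
  · exact ⟨f0, by decide, by decide, by decide, by decide, by decide, by decide⟩
  · exact ⟨f1, by decide, by decide, by decide, by decide, by decide, by decide⟩
end

section
/- In the AND₂ gadget graph, if both vertices of one input gate share a color (that input gate is not activated), then in the stable coloring under color refinement the two output vertices a₀ and a₁ receive the same color. -/
/-- A coloring `π` is equitable for `G` if equally colored vertices have, for every
color `c`, the same number of `c`-colored neighbors. -/
def Equitable {V C : Type*} (G : SimpleGraph V) (π : V → C) : Prop :=
  ∀ x y, π x = π y → ∀ c : C,
    {z | G.Adj x z ∧ π z = c}.ncard = {z | G.Adj y z ∧ π z = c}.ncard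

/-- `π` refines `α` (is finer than `α`). -/
def Refines {V C D : Type*} (π : V → C) (α : V → D) : Prop :=
  ∀ x y, π x = π y → α x = α y

instance inst_s10 : DecidableRel andGadget.Adj := fun x y =>
  decidable_of_iff (x ≠ y ∧ ((x, y) ∈ andEdges ∨ (y, x) ∈ andEdges)) Iff.rfl

lemma ncard_filter_eq (p : Fin 10 → Prop) [DecidablePred p] :
    {z | p z}.ncard = (Finset.univ.filter p).card := by
  rw [← Set.ncard_coe_finset]
  congr 1
  ext z; simp

lemma equitable_of_card {k : ℕ} (π : Fin 10 → Fin k)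
    (h : ∀ x y, π x = π y → ∀ c,
      (Finset.univ.filter (fun z => andGadget.Adj x z ∧ π z = c)).card =
      (Finset.univ.filter (fun z => andGadget.Adj y z ∧ π z = c)).card) :
    Equitable andGadget π := by
  intro x y hxy c
  rw [ncard_filter_eq, ncard_filter_eq]
  exact h x y hxy c

/-- The refined coloring used when input gate 2 is split. -/
def andColor2 : Fin 10 → Fin 6 := ![0, 0, 1, 2, 3, 4, 4, 3, 5, 5]

lemma equitable_andColor : Equitable andGadget andColor :=
  equitable_of_card _ (by decide)

lemma equitable_andColor2 : Equitable andGadget andColor2 :=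
  equitable_of_card _ (by decide)

/-- If in the initial coloring of the AND₂ gadget (refining the gate
coloring, with the middle layer one class and the output gate one class) the two vertices
of input gate 1 share a color (that gate is not activated), then the coarsest equitable
coloring refining it gives the two output vertices a₀ = 8 and a₁ = 9 the same color. -/
theorem stmt_10 {C₀ : Type*} (α : Fin 10 → C₀)
    (hgates : Refines α andColor) (hunsplit : α 0 = α 1)
    (hc45 : α 4 = α 5) (hc56 : α 5 = α 6) (hc67 : α 6 = α 7) (ha : α 8 = α 9) :
    ∀ {C : Type} (π : Fin 10 → C), Equitable andGadget π → Refines π α →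
      (∀ (C' : Type) (π' : Fin 10 → C'), Equitable andGadget π' → Refines π' α →
        Refines π' π) →
      π 8 = π 9 := by
  intro C π hE hR hcoarse
  have h46 := hc45.trans hc56
  have h47 := h46.trans hc67
  have h57 := hc56.trans hc67
  by_cases h23 : α 2 = α 3
  · have href : Refines andColor α := by
      intro x y hxy
      fin_cases x <;> fin_cases y <;>
        first
          | rfl
          | exact hunsplit | exact hunsplit.symm
          | exact h23 | exact h23.symm
          | exact hc45 | exact hc45.symm | exact hc56 | exact hc56.symm
          | exact hc67 | exact hc67.symm | exact h46 | exact h46.symm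
          | exact h47 | exact h47.symm | exact h57 | exact h57.symm
          | exact ha | exact ha.symm
          | exact absurd hxy (by decide)
    exact hcoarse (Fin 4) andColor equitable_andColor href 8 9 rfl
  · have href : Refines andColor2 α := by
      intro x y hxy
      fin_cases x <;> fin_cases y <;>
        first
          | rfl
          | exact hunsplit | exact hunsplit.symm
          | exact hc45 | exact hc45.symm | exact hc56 | exact hc56.symm
          | exact hc67 | exact hc67.symm | exact h46 | exact h46.symm
          | exact h47 | exact h47.symm | exact h57 | exact h57.symm
          | exact ha | exact ha.symm
          | exact absurd hxy (by decide)
    exact hcoarse (Fin 6) andColor2 equitable_andColor2 href 8 9 rfl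
end

section
/- A directed cycle C_n realized as an undirected colored graph — with n base vertices of color 0 and, for each cycle edge, two auxiliary vertices of colors d₁ and d₂ forming a path b_i — d_{1,i} — d_{2,i} — b_{i+1} — has automorphism group (of the colored graph) isomorphic to the cyclic group Z/n, acting regularly on the base vertices. -/
/-- The "directed edge" relation of the symmetry cycle of length n: vertices are pairs
(j, i) with j ∈ Fin 3 the color (j = 0: base vertex bᵢ, j = 1: auxiliary vertex d₁ᵢ,
j = 2: auxiliary vertex d₂ᵢ) and i ∈ Fin n the position; edges bᵢ—d₁ᵢ, d₁ᵢ—d₂ᵢ,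
d₂ᵢ—b_{i+1}. -/
def symRel {n : ℕ} [NeZero n] (x y : Fin 3 × Fin n) : Prop :=
  (x.1 = 0 ∧ y.1 = 1 ∧ y.2 = x.2) ∨ (x.1 = 1 ∧ y.1 = 2 ∧ y.2 = x.2) ∨
    (x.1 = 2 ∧ y.1 = 0 ∧ y.2 = x.2 + 1)

/-- The symmetry cycle of length n as an undirected colored graph; the color of a vertex
is its first coordinate. -/
def symCycle (n : ℕ) [NeZero n] : SimpleGraph (Fin 3 × Fin n) where
  Adj x y := x ≠ y ∧ (symRel x y ∨ symRel y x)
  symm := ⟨fun _ _ h => ⟨h.1.symm, h.2.symm⟩⟩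
  loopless := ⟨fun _ h => h.1 rfl⟩

section Aux
variable {n : ℕ} [NeZero n]

lemma adj01 (i : Fin n) : (symCycle n).Adj (0, i) (1, i) :=
  ⟨by simp, Or.inl (Or.inl ⟨rfl, rfl, rfl⟩)⟩

lemma adj12 (i : Fin n) : (symCycle n).Adj (1, i) (2, i) :=
  ⟨by simp, Or.inl (Or.inr (Or.inl ⟨rfl, rfl, rfl⟩))⟩

lemma adj20 (i : Fin n) : (symCycle n).Adj (2, i) (0, i + 1) :=
  ⟨by simp, Or.inl (Or.inr (Or.inr ⟨rfl, rfl, rfl⟩))⟩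

lemma adj01' {a s : Fin n} (h : (symCycle n).Adj (0, a) (1, s)) : s = a := by
  rcases h with ⟨-, h | h⟩ <;>
    rcases h with ⟨h1, h2, h3⟩ | ⟨h1, h2, h3⟩ | ⟨h1, h2, h3⟩ <;> simp_all

lemma adj12' {a s : Fin n} (h : (symCycle n).Adj (1, a) (2, s)) : s = a := by
  rcases h with ⟨-, h | h⟩ <;>
    rcases h with ⟨h1, h2, h3⟩ | ⟨h1, h2, h3⟩ | ⟨h1, h2, h3⟩ <;> simp_all

lemma adj20' {a s : Fin n} (h : (symCycle n).Adj (2, a) (0, s)) : s = a + 1 := by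
  rcases h with ⟨-, h | h⟩ <;>
    rcases h with ⟨h1, h2, h3⟩ | ⟨h1, h2, h3⟩ | ⟨h1, h2, h3⟩ <;> simp_all

variable {f : (Fin 3 × Fin n) ≃ (Fin 3 × Fin n)}
  (hadj : ∀ x y, (symCycle n).Adj (f x) (f y) ↔ (symCycle n).Adj x y)
  (hcol : ∀ x, (f x).1 = x.1)

include hadj hcol

lemma step1 {i a : Fin n} (h : f (0, i) = (0, a)) : f (1, i) = (1, a) := by
  have h1 : f (1, i) = (1, (f (1, i)).2) := Prod.ext (hcol _) rfl
  have := (hadj (0, i) (1, i)).mpr (adj01 i)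
  rw [h, h1] at this
  rw [h1, adj01' this]

lemma step2 {i a : Fin n} (h : f (1, i) = (1, a)) : f (2, i) = (2, a) := by
  have h1 : f (2, i) = (2, (f (2, i)).2) := Prod.ext (hcol _) rfl
  have := (hadj (1, i) (2, i)).mpr (adj12 i)
  rw [h, h1] at this
  rw [h1, adj12' this]

lemma step3 {i a : Fin n} (h : f (2, i) = (2, a)) : f (0, i + 1) = (0, a + 1) := by
  have h1 : f (0, i + 1) = (0, (f (0, i + 1)).2) := Prod.ext (hcol _) rfl
  have := (hadj (2, i) (0, i + 1)).mpr (adj20 i)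
  rw [h, h1] at this
  rw [h1, adj20' this]

open scoped Fin.CommRing in
lemma base_rot (k : ℕ) : f (0, (k : Fin n)) = (0, (k : Fin n) + (f (0, 0)).2) := by
  induction k with
  | zero =>
    simp only [Nat.cast_zero, zero_add]
    exact Prod.ext (hcol _) rfl
  | succ k ih =>
    have := step3 hadj hcol (step2 hadj hcol (step1 hadj hcol ih))
    push_cast
    rw [this]
    ring_nf

open scoped Fin.CommRing in
lemma rot_all (x : Fin 3 × Fin n) : f x = (x.1, x.2 + (f (0, 0)).2) := by
  obtain ⟨j, i⟩ := x
  have hb : f (0, i) = (0, i + (f (0, 0)).2) := by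
    have := base_rot hadj hcol (i : ℕ)
    rwa [Fin.cast_val_eq_self] at this
  fin_cases j
  · exact hb
  · exact step1 hadj hcol hb
  · exact step2 hadj hcol (step1 hadj hcol hb)

end Aux


section Main
variable {n : ℕ} [NeZero n]

/-- rotation by t -/
def rotE (t : Fin n) : (Fin 3 × Fin n) ≃ (Fin 3 × Fin n) :=
  (Equiv.refl (Fin 3)).prodCongr (Equiv.addRight t)

lemma rotE_apply (t : Fin n) (x : Fin 3 × Fin n) : rotE t x = (x.1, x.2 + t) := rfl

open scoped Fin.CommRing in
lemma rot_symRel (t : Fin n) (x y : Fin 3 × Fin n) :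
    symRel (rotE t x) (rotE t y) ↔ symRel x y := by
  obtain ⟨j, i⟩ := x; obtain ⟨k, m⟩ := y
  simp only [symRel, rotE_apply]
  constructor <;> rintro (⟨h1,h2,h3⟩|⟨h1,h2,h3⟩|⟨h1,h2,h3⟩)
  · exact Or.inl ⟨h1, h2, by exact add_right_cancel h3⟩
  · exact Or.inr (Or.inl ⟨h1, h2, by exact add_right_cancel h3⟩)
  · refine Or.inr (Or.inr ⟨h1, h2, ?_⟩)
    have : m + t = i + t + 1 := h3
    have : m + t + 1 = i + 1 + t + 1 := by rw [this]; ring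
    have := add_right_cancel this
    exact add_right_cancel this
  · exact Or.inl ⟨h1, h2, by rw [h3]⟩
  · exact Or.inr (Or.inl ⟨h1, h2, by rw [h3]⟩)
  · exact Or.inr (Or.inr ⟨h1, h2, by rw [h3]; ring⟩)

lemma rot_adj (t : Fin n) (x y : Fin 3 × Fin n) :
    (symCycle n).Adj (rotE t x) (rotE t y) ↔ (symCycle n).Adj x y := by
  show ((_ ≠ _) ∧ _) ↔ ((_ ≠ _) ∧ _)
  rw [rot_symRel, rot_symRel, ne_eq, EmbeddingLike.apply_eq_iff_eq, ne_eq]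

end Main

/-- The color-preserving automorphisms of the symmetry cycle of length n
are exactly the n rotations: every automorphism is rotation by a unique t ∈ Z/n, every
rotation is an automorphism (so the automorphism group is isomorphic to Z/n), and the
automorphism group acts regularly on the base vertices. -/
theorem stmt_19 (n : ℕ) [NeZero n] :
    (∀ f : (Fin 3 × Fin n) ≃ (Fin 3 × Fin n),
      ((∀ x y, (symCycle n).Adj (f x) (f y) ↔ (symCycle n).Adj x y) ∧
        ∀ x, (f x).1 = x.1) →
      ∃! t : Fin n, ∀ x, f x = (x.1, x.2 + t)) ∧
    (∀ t : Fin n, ∃ f : (Fin 3 × Fin n) ≃ (Fin 3 × Fin n),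
      ((∀ x y, (symCycle n).Adj (f x) (f y) ↔ (symCycle n).Adj x y) ∧
        ∀ x, (f x).1 = x.1) ∧ ∀ x, f x = (x.1, x.2 + t)) ∧
    (∀ i₁ i₂ : Fin n, ∃! f : (Fin 3 × Fin n) ≃ (Fin 3 × Fin n),
      ((∀ x y, (symCycle n).Adj (f x) (f y) ↔ (symCycle n).Adj x y) ∧
        ∀ x, (f x).1 = x.1) ∧ f (0, i₁) = (0, i₂)) := by
  refine ⟨?_, ?_, ?_⟩
  · rintro f ⟨hadj, hcol⟩
    refine ⟨(f (0, 0)).2, rot_all hadj hcol, ?_⟩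
    intro t ht
    have := ht (0, 0)
    rw [rot_all hadj hcol (0, 0)] at this
    have := (Prod.ext_iff.mp this).2
    simpa using this.symm
  · intro t
    exact ⟨rotE t, ⟨rot_adj t, fun x => rfl⟩, rotE_apply t⟩
  · intro i₁ i₂
    refine ⟨rotE (i₂ - i₁), ⟨⟨rot_adj _, fun x => rfl⟩, ?_⟩, ?_⟩
    · rw [rotE_apply]; simp
    · rintro g ⟨⟨hadj, hcol⟩, hg⟩
      have hall := rot_all hadj hcol
      have ht : i₁ + (g (0, 0)).2 = i₂ := by
        have := hall (0, i₁); rw [hg] at this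
        exact ((Prod.ext_iff.mp this).2).symm
      have : (g (0, 0)).2 = i₂ - i₁ := eq_sub_of_add_eq' ht
      refine Equiv.ext fun x => ?_
      rw [hall x, rotE_apply, this]
end
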